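/- Let λ, μ, γ be real numbers with λ + μ + γ ≠ 0, and let M(λ,μ,γ) be the 3×3 real matrix whose rows are (λ,λ,λ), (μ,μ,μ), (γ,γ,γ). If λμγ ≠ 0 and one of the following holds: (1) λμ(λ+μ)(λ+μ+γ) > 0 and γ(λ+μ) < 0; (2) λμ(λ+μ)(λ+μ+γ) < 0 and γ(λ+μ) > 0; (3) λ + μ = 0; then the evolution algebra E_{M(λ,μ,γ)} is isomorphic to the evolution algebra E₈ whose structure matrix has rows (1,0,0), (1,0,0), (−1,0,0). -/

import Mathlib

/-- Evolution algebra multiplication on ℝ³ determined by a structure matrix `A`: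
`(x ∗_A y) j = ∑ i, x i * y i * A i j`. -/
def evolMul (A : Matrix (Fin 3) (Fin 3) ℝ) (x y : Fin 3 → ℝ) : Fin 3 → ℝ :=
  fun j => ∑ i, x i * y i * A i j

/-- The evolution algebras with structure matrices `A` and `B` are isomorphic:
there is an ℝ-linear equivalence of ℝ³ intertwining the two multiplications. -/
def EvolIso (A B : Matrix (Fin 3) (Fin 3) ℝ) : Prop :=
  ∃ f : (Fin 3 → ℝ) ≃ₗ[ℝ] (Fin 3 → ℝ),
    ∀ x y, f (evolMul A x y) = evolMul B (f x) (f y)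

lemma evolIso_trans {A B C : Matrix (Fin 3) (Fin 3) ℝ}
    (h1 : EvolIso A B) (h2 : EvolIso B C) : EvolIso A C := by
  obtain ⟨f, hf⟩ := h1
  obtain ⟨g, hg⟩ := h2
  exact ⟨f.trans g, fun x y => by simp only [LinearEquiv.trans_apply, hf, hg]⟩

lemma swap02 (l m g : ℝ) :
    EvolIso (!![l,l,l;m,m,m;g,g,g]) (!![g,g,g;m,m,m;l,l,l]) := by
  refine ⟨LinearEquiv.funCongrLeft ℝ ℝ (Equiv.swap (0 : Fin 3) 2), fun x y => ?_⟩
  funext j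
  fin_cases j <;>
    simp [evolMul, Fin.sum_univ_three, LinearEquiv.funCongrLeft_apply,
      Equiv.swap_apply_def, Function.comp] <;> ring

lemma swap12 (l m g : ℝ) :
    EvolIso (!![l,l,l;m,m,m;g,g,g]) (!![l,l,l;g,g,g;m,m,m]) := by
  refine ⟨LinearEquiv.funCongrLeft ℝ ℝ (Equiv.swap (1 : Fin 3) 2), fun x y => ?_⟩
  funext j
  fin_cases j <;>
    simp [evolMul, Fin.sum_univ_three, LinearEquiv.funCongrLeft_apply,
      Equiv.swap_apply_def, Function.comp] <;> ring

lemma comp0 (l m g r t x0 x1 x2 y0 y1 y2 : ℝ) (hP : l + m ≠ 0)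
    (hr2 : r ^ 2 * (l + m) = (l + m + g) * l * m)
    (ht2 : t ^ 2 * (l + m) = -g) :
    (l * x0 + m * x1 + g * x2) * (l * y0 + m * y1 + g * y2)
      + (r * x0 + -(r * x1)) * (r * y0 + -(r * y1))
      - (-(l * t) * x0 + -(m * t) * x1 + (l + m) * t * x2)
        * (-(l * t) * y0 + -(m * t) * y1 + (l + m) * t * y2)
    = (l + m + g) * (l * (x0 * y0) + m * (x1 * y1) + g * (x2 * y2)) := by
  apply mul_left_cancel₀ hP
  linear_combination ((x0 - x1) * (y0 - y1)) * hr2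
    - ((l * x0 + m * x1 - (l + m) * x2) * (l * y0 + m * y1 - (l + m) * y2)) * ht2

set_option maxHeartbeats 1000000 in
lemma key (l m g : ℝ) (hs : l + m + g ≠ 0)
    (ha : (l + m + g) * l > 0) (hb : (l + m + g) * m > 0) (hc : (l + m + g) * g < 0) :
    EvolIso (!![l,l,l;m,m,m;g,g,g]) (!![1,0,0;1,0,0;-1,0,0]) := by
  have hP : (l + m + g) * (l + m) > 0 := by nlinarith
  have hPne : l + m ≠ 0 := by
    intro h0; rw [h0, mul_zero] at hP; exact lt_irrefl 0 hP
  have hrarg : (l + m + g) * l * m / (l + m) > 0 := by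
    have h9 : (l + m + g) * l * m / (l + m)
        = (((l+m+g)*l) * ((l+m+g)*m)) / ((l+m+g) * (l+m)) := by
      field_simp
    rw [h9]; positivity
  have hzarg : -(g * (l + m)) > 0 := by
    have h2 : ((l+m+g)*g) * ((l+m+g)*(l+m)) < 0 := mul_neg_of_neg_of_pos hc hP
    nlinarith [sq_nonneg (l+m+g)]
  set r : ℝ := Real.sqrt ((l + m + g) * l * m / (l + m)) with hrdef
  set t : ℝ := Real.sqrt (-(g * (l + m))) / (l + m) with htdef
  have hr2 : r ^ 2 * (l + m) = (l + m + g) * l * m := by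
    rw [hrdef, Real.sq_sqrt hrarg.le]; field_simp
  have ht2 : t ^ 2 * (l + m) = -g := by
    rw [htdef, div_pow, Real.sq_sqrt hzarg.le]; field_simp
  have hrne : r ≠ 0 := by
    rw [hrdef]; positivity
  have htne : t ≠ 0 := by
    rw [htdef]
    exact div_ne_zero (by positivity) hPne
  clear_value r t
  set M : Matrix (Fin 3) (Fin 3) ℝ :=
    !![l, m, g; r, -r, 0; -(l*t), -(m*t), (l+m)*t] with hMdef
  have hinj : Function.Injective (Matrix.toLin' M) := by
    rw [← LinearMap.ker_eq_bot, LinearMap.ker_eq_bot']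
    intro v hv
    rw [Matrix.toLin'_apply] at hv
    have h0 := congrFun hv 0
    have h1 := congrFun hv 1
    have h2 := congrFun hv 2
    simp [hMdef, Matrix.mulVec, dotProduct, Fin.sum_univ_three] at h0 h1 h2
    have e01 : v 0 = v 1 := by
      have hzz : r * (v 0 - v 1) = 0 := by linear_combination h1
      rcases mul_eq_zero.mp hzz with h | h
      · exact absurd h hrne
      · linarith
    have e21 : v 2 = v 1 := by
      have hzz : t * (l + m) * (v 2 - v 1) = 0 := by
        linear_combination h2 + (l * t) * e01
      rcases mul_eq_zero.mp hzz with h | h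
      · rcases mul_eq_zero.mp h with h' | h'
        · exact absurd h' htne
        · exact absurd h' hPne
      · linarith
    have e1 : v 1 = 0 := by
      have hzz : (l + m + g) * v 1 = 0 := by
        linear_combination h0 - l * e01 - g * e21
      rcases mul_eq_zero.mp hzz with h | h
      · exact absurd h hs
      · exact h
    funext i
    fin_cases i
    · simpa using e01.trans e1
    · simpa using e1
    · simpa using e21.trans e1
  refine ⟨LinearEquiv.ofBijective (Matrix.toLin' M)
    ⟨hinj, LinearMap.injective_iff_surjective.mp hinj⟩, ?_⟩
  intro x y
  show Matrix.toLin' M (evolMul _ x y) = evolMul _ (Matrix.toLin' M x) (Matrix.toLin' M y)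
  rw [Matrix.toLin'_apply, Matrix.toLin'_apply, Matrix.toLin'_apply]
  funext j
  fin_cases j
  · simp [evolMul, Matrix.mulVec, dotProduct, Fin.sum_univ_three, hMdef]
    linear_combination - comp0 l m g r t (x 0) (x 1) (x 2) (y 0) (y 1) (y 2) hPne hr2 ht2
  · simp [evolMul, Matrix.mulVec, dotProduct, Fin.sum_univ_three, hMdef] <;> ring
  · simp [evolMul, Matrix.mulVec, dotProduct, Fin.sum_univ_three, hMdef] <;> ring

set_option maxHeartbeats 1000000 in
theorem stmt (l m g : ℝ) (hsum : l + m + g ≠ 0)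
    (h1 : l * m * g ≠ 0)
    (h : (l * m * (l + m) * (l + m + g) > 0 ∧ g * (l + m) < 0) ∨
         (l * m * (l + m) * (l + m + g) < 0 ∧ g * (l + m) > 0) ∨
         l + m = 0) :
    EvolIso (!![l, l, l; m, m, m; g, g, g] : Matrix (Fin 3) (Fin 3) ℝ) (!![1, 0, 0; 1, 0, 0; -1, 0, 0] : Matrix (Fin 3) (Fin 3) ℝ) := by
  have hl : l ≠ 0 := fun h0 => h1 (by rw [h0]; ring)
  have hm : m ≠ 0 := fun h0 => h1 (by rw [h0]; ring)
  have hg : g ≠ 0 := fun h0 => h1 (by rw [h0]; ring)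
  have hs2 : (l + m + g) ^ 2 > 0 := by positivity
  -- the product of the three scaled weights is negative
  have habc : (l + m + g) * l * m * g < 0 := by
    rcases h with ⟨h1a, h1b⟩ | ⟨h2a, h2b⟩ | h3
    · have k1 : (l + m + g) * l * m * g * (l + m) ^ 2 < 0 := by
        nlinarith [mul_pos h1a (neg_pos.2 h1b)]
      by_contra h'
      push_neg at h'
      nlinarith [sq_nonneg (l + m)]
    · have k1 : (l + m + g) * l * m * g * (l + m) ^ 2 < 0 := by
        nlinarith [mul_neg_of_neg_of_pos h2a h2b]
      by_contra h'
      push_neg at h'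
      nlinarith [sq_nonneg (l + m)]
    · have hm' : m = -l := by linarith
      subst hm'
      have : l ^ 2 * g ^ 2 > 0 := by positivity
      nlinarith
  have hsum2 : (l + m + g) * l + (l + m + g) * m + (l + m + g) * g > 0 := by
    nlinarith
  have hane : (l + m + g) * l ≠ 0 := mul_ne_zero hsum hl
  have hbne : (l + m + g) * m ≠ 0 := mul_ne_zero hsum hm
  have hcne : (l + m + g) * g ≠ 0 := mul_ne_zero hsum hg
  rcases hane.lt_or_gt with ha' | ha' <;>
    rcases hbne.lt_or_gt with hb' | hb' <;>
      rcases hcne.lt_or_gt with hc' | hc'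
  · -- (−,−,−): contradicts positive sum
    exact absurd hsum2 (by nlinarith)
  · -- (−,−,+): product positive, contradiction
    exact absurd habc (by nlinarith [mul_pos (mul_pos_of_neg_of_neg ha' hb') hc',
      mul_neg_of_pos_of_neg hs2 habc])
  · -- (−,+,−): product positive, contradiction
    exact absurd habc (by nlinarith [mul_pos (mul_pos_of_neg_of_neg ha' hc') hb',
      mul_neg_of_pos_of_neg hs2 habc])
  · -- (−,+,+): negative weight in slot 0, swap slots 0,2
    refine evolIso_trans (swap02 l m g) (key g m l ?_ ?_ ?_ ?_)
    · intro h0; exact hsum (by linarith)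
    · have e : (g + m + l) * g = (l + m + g) * g := by ring
      rw [e]; exact hc'
    · have e : (g + m + l) * m = (l + m + g) * m := by ring
      rw [e]; exact hb'
    · have e : (g + m + l) * l = (l + m + g) * l := by ring
      rw [e]; exact ha'
  · -- (+,−,−): product positive, contradiction
    exact absurd habc (by nlinarith [mul_pos (mul_pos_of_neg_of_neg hb' hc') ha',
      mul_neg_of_pos_of_neg hs2 habc])
  · -- (+,−,+): negative weight in slot 1, swap slots 1,2
    refine evolIso_trans (swap12 l m g) (key l g m ?_ ?_ ?_ ?_)
    · intro h0; exact hsum (by linarith)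
    · have e : (l + g + m) * l = (l + m + g) * l := by ring
      rw [e]; exact ha'
    · have e : (l + g + m) * g = (l + m + g) * g := by ring
      rw [e]; exact hc'
    · have e : (l + g + m) * m = (l + m + g) * m := by ring
      rw [e]; exact hb'
  · -- (+,+,−): direct application of key
    exact key l m g hsum ha' hb' hc'
  · -- (+,+,+): product positive, contradiction
    exact absurd habc (by nlinarith [mul_pos (mul_pos ha' hb') hc',
      mul_neg_of_pos_of_neg hs2 habc])
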